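/- Let F be a class of languages (assigning to each alphabet α a set F(α) of languages over α) such that: every finite language over any alphabet belongs to F; F is closed under binary union and under concatenation of languages over the same alphabet; and F is closed under iterated nested non-erasing F-substitution, meaning that whenever h is a substitution from α to α with ε ∉ h(a), the one-letter word a ∈ h(a), and h(a) ∈ F(α) for every letter a ∈ α, and L ∈ F(α), then ⋃_{n∈ℕ} hⁿ(L) ∈ F(α). Let G₁, G₂ be groups with surjective monoid homomorphisms π₁ : A₁* → G₁ and π₂ : A₂* → G₂ from the free monoids on finite alphabets A₁, A₂, set X = A₁ ⊕ A₂, and let π : X* → G₁ ∗ G₂ be the monoid homomorphism into the free product determined by sending each letter of Aᵢ to the inclusion into G₁ ∗ G₂ of its πᵢ-value. Assume that the images ι₁(π₁⁻¹(1)) and ι₂(π₂⁻¹(1)) of the word problems of G₁ and G₂ under the letter-inclusion embeddings ιᵢ : Aᵢ* → X* belong to F(X). Then the word problem π⁻¹(1) of G₁ ∗ G₂ belongs to F(X). -/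

import Mathlib

/-- The extension of a substitution `h` (assigning a language to each letter)
to a single word: `h(x₁⋯xₙ) = h(x₁)·h(x₂)⋯h(xₙ)`. -/
def substWord {α β : Type} (h : α → Language β) (w : List α) : Language β :=
  (w.map h).prod

/-- The extension of a substitution to a language: `h(L) = ⋃_{w ∈ L} h(w)`. -/
def substApply {α β : Type} (h : α → Language β) (L : Language α) : Language β :=
  ⋃ w ∈ L, substWord h w

/-- The word problem of a group `G` with respect to a monoid homomorphism `π`
from a free monoid, as a language: words (lists of letters) mapping to `1`. -/
def wordProblem {α : Type} {G : Type} [Group G] (π : FreeMonoid α →* G) :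
    Language α :=
  {w : List α | π (FreeMonoid.ofList w) = 1}

namespace WPaux


open Monoid

theorem substWord_nil {α : Type} (h : α → Language α) : substWord h [] = 1 := rfl

theorem substWord_cons {α : Type} (h : α → Language α) (a : α) (w : List α) :
    substWord h (a :: w) = h a * substWord h w := by
  rw [substWord, List.map_cons, List.prod_cons]; rfl

theorem substWord_append {α : Type} (h : α → Language α) (p s : List α) :
    substWord h (p ++ s) = substWord h p * substWord h s := by
  rw [substWord, List.map_append, List.prod_append]; rfl

theorem self_mem_substWord {α : Type} (h : α → Language α) (hnest : ∀ a, [a] ∈ h a) :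
    ∀ w : List α, w ∈ substWord h w := by
  intro w
  induction w with
  | nil => exact Language.nil_mem_one
  | cons a w ih =>
    rw [substWord_cons]
    exact Language.append_mem_mul (hnest a) ih

/-- Two-element family of groups indexed by `Bool`. -/
def F2 (G₁ G₂ : Type) : Bool → Type
  | true => G₁
  | false => G₂

instance {G₁ G₂ : Type} [Group G₁] [Group G₂] : ∀ b, Group (F2 G₁ G₂ b)
  | true => ‹Group G₁›
  | false => ‹Group G₂›

def toSig {G₁ G₂ : Type} : G₁ ⊕ G₂ → Σ b, F2 G₁ G₂ b
  | Sum.inl g => ⟨true, g⟩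
  | Sum.inr g => ⟨false, g⟩

theorem alt_list_eq_nil {G₁ G₂ : Type} [Group G₁] [Group G₂] (l : List (G₁ ⊕ G₂))
    (hne : ∀ x ∈ l, x.elim (· ≠ (1 : G₁)) (· ≠ (1 : G₂)))
    (halt : l.Chain' fun x y => x.isLeft ≠ y.isLeft)
    (hprod : (l.map (Sum.elim Coprod.inl Coprod.inr)).prod = 1) : l = [] := by
  classical
  let φ : Coprod G₁ G₂ →* CoprodI (F2 G₁ G₂) :=
    Coprod.lift (CoprodI.of (M := F2 G₁ G₂) (i := true)) (CoprodI.of (M := F2 G₁ G₂) (i := false))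
  have hne' : ∀ x ∈ l.map toSig, Sigma.snd x ≠ 1 := by
    intro x hx
    rcases List.mem_map.1 hx with ⟨y, hy, rfl⟩
    cases y with
    | inl g => exact hne _ hy
    | inr g => exact hne _ hy
  have hch : (l.map toSig).Chain' fun x y => x.1 ≠ y.1 := by
    rw [List.Chain', List.isChain_map]
    refine halt.imp ?_
    intro x y hxy
    cases x <;> cases y <;> simp_all [toSig]
  let w : CoprodI.Word (F2 G₁ G₂) := ⟨l.map toSig, hne', hch⟩
  have hw : w.prod = 1 := by
    have h1 : w.prod = φ ((l.map (Sum.elim Coprod.inl Coprod.inr)).prod) := by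
      rw [map_list_prod]
      show (List.map (fun x => CoprodI.of x.2) (l.map toSig)).prod = _
      rw [List.map_map, List.map_map]
      congr 1
      refine List.map_congr_left ?_
      intro x _
      cases x with
      | inl g => rfl
      | inr g => rfl
    rw [h1, hprod, map_one]
  have hinj : Function.Injective (CoprodI.Word.prod (M := F2 G₁ G₂)) :=
    (CoprodI.Word.equiv (M := F2 G₁ G₂)).symm.injective
  have hwe : w = CoprodI.Word.empty := hinj (by rw [hw, CoprodI.Word.prod_empty])
  have : l.map toSig = [] := congrArg CoprodI.Word.toList hwe
  exact List.map_eq_nil_iff.1 this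


def embed {A₁ A₂ : Type} : List A₁ ⊕ List A₂ → List (A₁ ⊕ A₂) :=
  Sum.elim (List.map Sum.inl) (List.map Sum.inr)

def blockify {A₁ A₂ : Type} : List (A₁ ⊕ A₂) → List (List A₁ ⊕ List A₂)
  | [] => []
  | Sum.inl a :: w =>
    match blockify w with
    | Sum.inl u :: bs => Sum.inl (a :: u) :: bs
    | bs => Sum.inl [a] :: bs
  | Sum.inr a :: w =>
    match blockify w with
    | Sum.inr u :: bs => Sum.inr (a :: u) :: bs
    | bs => Sum.inr [a] :: bs

theorem blockify_spec {A₁ A₂ : Type} (w : List (A₁ ⊕ A₂)) :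
    ((blockify w).map embed).flatten = w ∧
      (∀ b ∈ blockify w, b.elim (· ≠ ([] : List A₁)) (· ≠ ([] : List A₂))) ∧
      (blockify w).Chain' (fun x y => x.isLeft ≠ y.isLeft) := by
  induction w with
  | nil => simp [blockify, List.Chain']
  | cons a w ih =>
    obtain ⟨ih1, ih2, ih3⟩ := ih
    cases a with
    | inl a =>
      rcases hb : blockify w with _ | ⟨b, bs⟩
      · have heq : blockify (Sum.inl a :: w) = [Sum.inl [a]] := by simp [blockify, hb]
        rw [hb] at ih1
        simp at ih1
        refine ⟨?_, ?_, ?_⟩ <;> simp [heq, embed, ← ih1, List.Chain']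
      · cases b with
        | inl u =>
          have heq : blockify (Sum.inl a :: w) = Sum.inl (a :: u) :: bs := by
            simp [blockify, hb]
          rw [heq]; rw [hb] at ih1 ih2 ih3
          refine ⟨?_, ?_, ?_⟩
          · simp only [List.map_cons, List.flatten_cons, embed, Sum.elim_inl] at ih1 ⊢
            rw [← ih1]; simp
          · intro x hx
            rcases List.mem_cons.1 hx with rfl | hx
            · simp
            · exact ih2 x (List.mem_cons_of_mem _ hx)
          · cases bs with
            | nil => simp [List.Chain']
            | cons b' bs' =>
              rw [List.Chain', List.isChain_cons_cons] at ih3 ⊢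
              exact ⟨ih3.1, ih3.2⟩
        | inr u =>
          have heq : blockify (Sum.inl a :: w) = Sum.inl [a] :: Sum.inr u :: bs := by
            simp [blockify, hb]
          rw [heq]; rw [hb] at ih1 ih2 ih3
          refine ⟨?_, ?_, ?_⟩
          · simp only [List.map_cons, List.flatten_cons, embed, Sum.elim_inl] at ih1 ⊢
            rw [← ih1]; simp
          · intro x hx
            rcases List.mem_cons.1 hx with rfl | hx
            · simp
            · exact ih2 x hx
          · rw [List.Chain', List.isChain_cons_cons]
            exact ⟨by simp, ih3⟩
    | inr a =>
      rcases hb : blockify w with _ | ⟨b, bs⟩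
      · have heq : blockify (Sum.inr a :: w) = [Sum.inr [a]] := by simp [blockify, hb]
        rw [hb] at ih1
        simp at ih1
        refine ⟨?_, ?_, ?_⟩ <;> simp [heq, embed, ← ih1, List.Chain']
      · cases b with
        | inr u =>
          have heq : blockify (Sum.inr a :: w) = Sum.inr (a :: u) :: bs := by
            simp [blockify, hb]
          rw [heq]; rw [hb] at ih1 ih2 ih3
          refine ⟨?_, ?_, ?_⟩
          · simp only [List.map_cons, List.flatten_cons, embed, Sum.elim_inr] at ih1 ⊢
            rw [← ih1]; simp
          · intro x hx
            rcases List.mem_cons.1 hx with rfl | hx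
            · simp
            · exact ih2 x (List.mem_cons_of_mem _ hx)
          · cases bs with
            | nil => simp [List.Chain']
            | cons b' bs' =>
              rw [List.Chain', List.isChain_cons_cons] at ih3 ⊢
              exact ⟨ih3.1, ih3.2⟩
        | inl u =>
          have heq : blockify (Sum.inr a :: w) = Sum.inr [a] :: Sum.inl u :: bs := by
            simp [blockify, hb]
          rw [heq]; rw [hb] at ih1 ih2 ih3
          refine ⟨?_, ?_, ?_⟩
          · simp only [List.map_cons, List.flatten_cons, embed, Sum.elim_inr] at ih1 ⊢
            rw [← ih1]; simp
          · intro x hx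
            rcases List.mem_cons.1 hx with rfl | hx
            · simp
            · exact ih2 x hx
          · rw [List.Chain', List.isChain_cons_cons]
            exact ⟨by simp, ih3⟩

end WPaux

open WPaux Monoid

/-- Theorem (WP Free Product Closure): if the class `F` contains all finite
languages, is closed under union, concatenation and iterated nested non-erasing
`F`-substitution, and the (embedded) word problems of `G₁` and `G₂` lie in
`F(A₁ ⊕ A₂)`, then the word problem of `G₁ ∗ G₂` lies in `F(A₁ ⊕ A₂)`. -/
theorem wordProblem_freeProduct_mem
    (F : ∀ α : Type, Set (Language α))
    (hfin : ∀ (α : Type) (L : Language α), L.Finite → L ∈ F α)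
    (hunion : ∀ (α : Type) (L₁ L₂ : Language α),
      L₁ ∈ F α → L₂ ∈ F α → ((L₁ ∪ L₂ : Set (List α)) : Language α) ∈ F α)
    (hconcat : ∀ (α : Type) (L₁ L₂ : Language α),
      L₁ ∈ F α → L₂ ∈ F α → L₁ * L₂ ∈ F α)
    (hiter : ∀ (α : Type) (h : α → Language α),
      (∀ a : α, [] ∉ h a) → (∀ a : α, [a] ∈ h a) → (∀ a : α, h a ∈ F α) →
      ∀ L ∈ F α, (⋃ n : ℕ, (substApply h)^[n] L) ∈ F α)
    {G₁ G₂ : Type} [Group G₁] [Group G₂]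
    (A₁ A₂ : Type) [Fintype A₁] [Fintype A₂]
    (π₁ : FreeMonoid A₁ →* G₁) (π₂ : FreeMonoid A₂ →* G₂)
    (hπ₁ : Function.Surjective π₁) (hπ₂ : Function.Surjective π₂)
    (π : FreeMonoid (A₁ ⊕ A₂) →* Monoid.Coprod G₁ G₂)
    (hπl : ∀ a : A₁, π (FreeMonoid.of (Sum.inl a)) =
      Monoid.Coprod.inl (π₁ (FreeMonoid.of a)))
    (hπr : ∀ b : A₂, π (FreeMonoid.of (Sum.inr b)) =
      Monoid.Coprod.inr (π₂ (FreeMonoid.of b)))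
    (h₁ : (List.map Sum.inl '' wordProblem π₁ : Language (A₁ ⊕ A₂)) ∈ F (A₁ ⊕ A₂))
    (h₂ : (List.map Sum.inr '' wordProblem π₂ : Language (A₁ ⊕ A₂)) ∈ F (A₁ ⊕ A₂)) :
    wordProblem π ∈ F (A₁ ⊕ A₂) := by
  classical
  -- the language of trivial blocks
  let W : Language (A₁ ⊕ A₂) :=
    ((List.map Sum.inl '' wordProblem π₁) ∪ (List.map Sum.inr '' wordProblem π₂) :
      Set (List (A₁ ⊕ A₂)))
  have hWF : W ∈ F (A₁ ⊕ A₂) := hunion _ _ _ h₁ h₂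
  have hnilW : [] ∈ W := Or.inl ⟨[], map_one π₁, rfl⟩
  -- embeddings of letters
  have hembl : ∀ u : List A₁, π (FreeMonoid.ofList (List.map Sum.inl u))
      = Monoid.Coprod.inl (π₁ (FreeMonoid.ofList u)) := by
    intro u
    induction u with
    | nil =>
      show π 1 = Monoid.Coprod.inl (π₁ 1)
      rw [map_one, map_one, map_one]
    | cons a u ih =>
      show π (FreeMonoid.of (Sum.inl a) * FreeMonoid.ofList (List.map Sum.inl u))
        = Monoid.Coprod.inl (π₁ (FreeMonoid.of a * FreeMonoid.ofList u))
      rw [map_mul, map_mul, map_mul, ih, hπl]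
  have hembr : ∀ u : List A₂, π (FreeMonoid.ofList (List.map Sum.inr u))
      = Monoid.Coprod.inr (π₂ (FreeMonoid.ofList u)) := by
    intro u
    induction u with
    | nil =>
      show π 1 = Monoid.Coprod.inr (π₂ 1)
      rw [map_one, map_one, map_one]
    | cons a u ih =>
      show π (FreeMonoid.of (Sum.inr a) * FreeMonoid.ofList (List.map Sum.inr u))
        = Monoid.Coprod.inr (π₂ (FreeMonoid.of a * FreeMonoid.ofList u))
      rw [map_mul, map_mul, map_mul, ih, hπr]
  have hWtriv : ∀ t ∈ W, π (FreeMonoid.ofList t) = 1 := by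
    rintro t (⟨u, hu, rfl⟩ | ⟨u, hu, rfl⟩)
    · rw [hembl, show π₁ (FreeMonoid.ofList u) = 1 from hu, map_one]
    · rw [hembr, show π₂ (FreeMonoid.ofList u) = 1 from hu, map_one]
  -- the substitution
  let hs : (A₁ ⊕ A₂) → Language (A₁ ⊕ A₂) :=
    fun a => ((W * {[a]} ∪ {[a]} * W : Set (List (A₁ ⊕ A₂))) : Language (A₁ ⊕ A₂))
  have hsF : ∀ a, hs a ∈ F (A₁ ⊕ A₂) := fun a =>
    hunion _ _ _ (hconcat _ _ _ hWF (hfin _ _ (Set.finite_singleton _)))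
      (hconcat _ _ _ (hfin _ _ (Set.finite_singleton _)) hWF)
  have hsne : ∀ a, [] ∉ hs a := by
    rintro a (h | h) <;> replace h := Language.mem_mul.1 h <;>
      rcases h with ⟨x, hx, y, hy, hxy⟩
    · replace hy := Set.mem_singleton_iff.1 hy; subst hy; simp at hxy
    · replace hx := Set.mem_singleton_iff.1 hx; subst hx; simp at hxy
  have hsnest : ∀ a, [a] ∈ hs a :=
    fun a => Or.inl (Language.mem_mul.2 ⟨[], hnilW, [a], rfl, rfl⟩)
  have hπs : ∀ a, ∀ v ∈ hs a,
      π (FreeMonoid.ofList v) = π (FreeMonoid.ofList [a]) := by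
    rintro a v (h | h) <;> replace h := Language.mem_mul.1 h
    · rcases h with ⟨t, ht, y, hy, rfl⟩
      replace hy := Set.mem_singleton_iff.1 hy; subst hy
      rw [FreeMonoid.ofList_append, map_mul, hWtriv t ht, one_mul]
    · rcases h with ⟨y, hy, t, ht, rfl⟩
      replace hy := Set.mem_singleton_iff.1 hy; subst hy
      rw [FreeMonoid.ofList_append, map_mul, hWtriv t ht, mul_one]
  -- substitution preserves the image under π
  have hsw : ∀ w v : List (A₁ ⊕ A₂), v ∈ substWord hs w →
      π (FreeMonoid.ofList v) = π (FreeMonoid.ofList w) := by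
    intro w
    induction w with
    | nil =>
      intro v hv
      rw [show v = [] from hv]
    | cons a w ih =>
      intro v hv
      rw [substWord_cons, Language.mem_mul] at hv
      rcases hv with ⟨x, hx, y, hy, rfl⟩
      rw [FreeMonoid.ofList_append, map_mul, hπs a x hx, ih y hy, ← map_mul,
        ← FreeMonoid.ofList_append]
      rfl
  -- soundness: every word in the iteration is in the word problem
  have hsound : ∀ n, ∀ v ∈ (substApply hs)^[n] W, π (FreeMonoid.ofList v) = 1 := by
    intro n
    induction n with
    | zero => exact hWtriv
    | succ n ih =>
      intro v hv
      rw [Function.iterate_succ_apply'] at hv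
      rcases Set.mem_iUnion₂.1 hv with ⟨u, hu, hvu⟩
      rw [hsw u v hvu, ih u hu]
  -- π on joined embedded blocks
  have hπblocks : ∀ bs : List (List A₁ ⊕ List A₂),
      π (FreeMonoid.ofList ((bs.map embed).flatten)) =
        ((bs.map (Sum.map (fun u => π₁ (FreeMonoid.ofList u))
            (fun u => π₂ (FreeMonoid.ofList u)))).map
          (Sum.elim Monoid.Coprod.inl Monoid.Coprod.inr)).prod := by
    intro bs
    induction bs with
    | nil => exact map_one π
    | cons b bs ih =>
      rw [List.map_cons, List.flatten_cons, FreeMonoid.ofList_append, map_mul, ih,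
        List.map_cons, List.map_cons, List.prod_cons]
      congr 1
      cases b with
      | inl u => exact hembl u
      | inr u => exact hembr u
  -- completeness: key induction
  have key : ∀ (N : ℕ) (w : List (A₁ ⊕ A₂)), w.length ≤ N →
      π (FreeMonoid.ofList w) = 1 → ∃ n, w ∈ (substApply hs)^[n] W := by
    intro N
    induction N with
    | zero =>
      intro w hw _
      rw [List.length_eq_zero_iff.1 (Nat.le_zero.1 hw)]
      exact ⟨0, hnilW⟩
    | succ N ih =>
      intro w hlen hw1
      by_cases hnil : w = []
      · exact ⟨0, hnil ▸ hnilW⟩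
      obtain ⟨hjoin, hblk_ne, hblk_alt⟩ := blockify_spec w
      -- the general "delete a trivial block" step
      have finish : ∀ p t s : List (A₁ ⊕ A₂), w = p ++ t ++ s → t ∈ W → t ≠ [] →
          ∃ n, w ∈ (substApply hs)^[n] W := by
        intro p t s hw ht htne
        rcases eq_or_ne (p ++ s) [] with hps | hps
        · rcases List.append_eq_nil_iff.1 hps with ⟨rfl, rfl⟩
          refine ⟨0, ?_⟩
          simpa [hw] using ht
        · have hπps : π (FreeMonoid.ofList (p ++ s)) = 1 := by
            have h0 := hw1
            rw [hw, FreeMonoid.ofList_append, FreeMonoid.ofList_append, map_mul, map_mul,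
              hWtriv t ht, mul_one] at h0
            rw [FreeMonoid.ofList_append, map_mul, h0]
          have hlen' : (p ++ s).length ≤ N := by
            have h1 : w.length = p.length + (t.length + s.length) := by simp [hw]
            have h2 : 1 ≤ t.length := List.length_pos_iff.2 htne
            rw [List.length_append]
            omega
          obtain ⟨n, hn⟩ := ih (p ++ s) hlen' hπps
          refine ⟨n + 1, ?_⟩
          rw [Function.iterate_succ_apply']
          have hmem : w ∈ substWord hs (p ++ s) := by
            rcases s with _ | ⟨c, s'⟩
            · have hp : p ≠ [] := by simpa using hps
              obtain ⟨p', c, rfl⟩ := (List.eq_nil_or_concat' p).resolve_left hp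
              have hweq : w = p' ++ ([c] ++ t) := by rw [hw]; simp
              rw [List.append_nil, substWord_append, hweq]
              refine Language.append_mem_mul (self_mem_substWord hs hsnest p') ?_
              rw [substWord_cons, substWord_nil, mul_one]
              exact Or.inr (Language.mem_mul.2 ⟨[c], rfl, t, ht, rfl⟩)
            · have hweq : w = p ++ ((t ++ [c]) ++ s') := by rw [hw]; simp
              rw [substWord_append, substWord_cons, hweq]
              refine Language.append_mem_mul (self_mem_substWord hs hsnest p) ?_
              refine Language.append_mem_mul ?_ (self_mem_substWord hs hsnest s')
              exact Or.inl (Language.mem_mul.2 ⟨t, ht, [c], rfl, rfl⟩)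
          exact Set.mem_biUnion hn hmem
      -- find a trivial block using the normal form of the free product
      rcases Classical.em (∃ b ∈ blockify w,
          ¬ (Sum.map (fun u => π₁ (FreeMonoid.ofList u))
              (fun u => π₂ (FreeMonoid.ofList u)) b).elim
            (· ≠ (1 : G₁)) (· ≠ (1 : G₂))) with hex | hall
      · obtain ⟨b, hb, hx⟩ := hex
        obtain ⟨l₁, l₂, hsplit⟩ := List.append_of_mem hb
        have hwsplit : w = ((l₁.map embed).flatten) ++ embed b ++ ((l₂.map embed).flatten) := by
          rw [← hjoin, hsplit]
          simp
        have hbne := hblk_ne b hb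
        cases b with
        | inl u =>
          simp only [Sum.map_inl, Sum.elim_inl, not_not] at hx
          have htW : embed (Sum.inl u : List A₁ ⊕ List A₂) ∈ W := Or.inl ⟨u, hx, rfl⟩
          have htne : embed (Sum.inl u : List A₁ ⊕ List A₂) ≠ [] := by
            simp only [Sum.elim_inl] at hbne
            simp [embed, hbne]
          exact finish _ _ _ hwsplit htW htne
        | inr u =>
          simp only [Sum.map_inr, Sum.elim_inr, not_not] at hx
          have htW : embed (Sum.inr u : List A₁ ⊕ List A₂) ∈ W := Or.inr ⟨u, hx, rfl⟩
          have htne : embed (Sum.inr u : List A₁ ⊕ List A₂) ≠ [] := by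
            simp only [Sum.elim_inr] at hbne
            simp [embed, hbne]
          exact finish _ _ _ hwsplit htW htne
      · exfalso
        have htriv : ∀ x ∈ (blockify w).map (Sum.map (fun u => π₁ (FreeMonoid.ofList u))
            (fun u => π₂ (FreeMonoid.ofList u))),
            x.elim (· ≠ (1 : G₁)) (· ≠ (1 : G₂)) := by
          intro x hxl
          rcases List.mem_map.1 hxl with ⟨b, hb, rfl⟩
          by_contra hc
          exact hall ⟨b, hb, hc⟩
        have halt' : ((blockify w).map (Sum.map (fun u => π₁ (FreeMonoid.ofList u))
            (fun u => π₂ (FreeMonoid.ofList u)))).Chain'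
            (fun x y => x.isLeft ≠ y.isLeft) := by
          rw [List.Chain', List.isChain_map]
          refine hblk_alt.imp ?_
          intro x y hxy
          cases x <;> cases y <;>
            simp only [Sum.map_inl, Sum.map_inr, Sum.isLeft_inl, Sum.isLeft_inr] at hxy ⊢ <;>
            exact hxy
        have hprod := hπblocks (blockify w)
        rw [hjoin, hw1] at hprod
        have hempty := alt_list_eq_nil _ htriv halt' hprod.symm
        rw [List.map_eq_nil_iff] at hempty
        rw [hempty] at hjoin
        exact hnil (by simpa using hjoin.symm)
  -- the word problem is the iterated substitution closure
  have hmain : wordProblem π = ⋃ n, (substApply hs)^[n] W := by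
    ext v
    constructor
    · intro hv
      obtain ⟨n, hn⟩ := key v.length v le_rfl hv
      exact Set.mem_iUnion.2 ⟨n, hn⟩
    · intro hv
      obtain ⟨n, hn⟩ := Set.mem_iUnion.1 hv
      exact hsound n v hn
  rw [hmain]
  exact hiter _ hs hsne hsnest hsF W hWF
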